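/- Let Ω_1,…,Ω_r ∈ Mat_n(ℂ[[q^1,…,q^r]]) with p_a := Ω_a|_{q=0}, let e_0 ∈ ℂ^n satisfy Ω_a·e_0 = p_a·e_0 as vectors of power series for every a, and let S ∈ Mat_n(ℂ[[ħ^{-1}]][[q]]) be invertible with S|_{q=0} = Id and ħθ_a S + Ω_a S − S p_a = 0 for all a. Then S ≡ Id modulo ħ^{-1}, and writing S^{-1} = Id + ħ^{-1}S_1 + ħ^{-2}S_2 + ⋯ with S_k ∈ Mat_n(ℂ[[q]]), one has S_1·e_0 = 0; equivalently S^{-1}e_0 ≡ e_0 modulo ħ^{-2}. -/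

import Mathlib

/-!
Work over ℂ.  We represent the coefficient ring `ℂ[ħ,ħ⁻¹]]` (formal Laurent
series `Σ_{k ≤ K} c_k ħ^k` with finitely many positive powers of `ħ`) as
`LaurentSeries ℂ` in the variable `t = ħ⁻¹`; thus the coefficient of `t^k`
is the coefficient of `ħ^{-k}`.  `AA r = ℂ[ħ,ħ⁻¹]][[q¹,…,qʳ]]`, and
`θ_a = qᵃ·∂/∂qᵃ` is the logarithmic partial derivative.
-/

noncomputable section

/-- `ℂ[ħ,ħ⁻¹]]`, realized as Laurent series in `t = ħ⁻¹`. -/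
abbrev LS := LaurentSeries ℂ

/-- `ħ = t⁻¹` where `t` is the `LaurentSeries` variable. -/
def hbarL : LS := HahnSeries.single (-1 : ℤ) (1 : ℂ)

/-- `ℂ[ħ,ħ⁻¹]][[q¹,…,qʳ]]`. -/
abbrev AA (r : ℕ) := MvPowerSeries (Fin r) LS

/-- The logarithmic derivative `θ_a = qᵃ ∂/∂qᵃ`:
on the monomial `q^d` it acts by multiplication by `d a`. -/
def thetaA {r : ℕ} (a : Fin r) (x : AA r) : AA r := fun d => (d a : LS) * x d

/-- `θ_a` acting entrywise on matrices. -/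
def thetaMat {r n : ℕ} (a : Fin r) (M : Matrix (Fin n) (Fin n) (AA r)) :
    Matrix (Fin n) (Fin n) (AA r) :=
  Matrix.of fun i j => thetaA a (M i j)

/-- `ħ` as an element of `ℂ[ħ,ħ⁻¹]][[q]]`. -/
def hbarA (r : ℕ) : AA r := (MvPowerSeries.C : LS →+* AA r) hbarL

/-- The constant term at `q = 0`. -/
def ccA {r : ℕ} : AA r →+* LS := MvPowerSeries.constantCoeff

/-- The embedding `ℂ → ℂ[ħ,ħ⁻¹]][[q]]`. -/
def cA (r : ℕ) : ℂ →+* AA r := (MvPowerSeries.C : LS →+* AA r).comp HahnSeries.C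

/-- `x ∈ ℂ[ħ]`: `x` is a polynomial in `ħ` (no negative powers of `ħ`,
i.e. no positive powers of `t`; finiteness is automatic for Laurent series). -/
def isPolyH (x : LS) : Prop := ∀ k : ℤ, 0 < k → x.coeff k = 0

/-- `x ∈ ℂ[[ħ⁻¹]]`: `x` is regular at `ħ = ∞` (no positive powers of `ħ`). -/
def isRegH (x : LS) : Prop := ∀ k : ℤ, k < 0 → x.coeff k = 0

/-- `x ∈ ℂ`: `x` is a constant, independent of `ħ`. -/
def isConstH (x : LS) : Prop := ∀ k : ℤ, k ≠ 0 → x.coeff k = 0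

/-- A matrix over `ℂ[ħ,ħ⁻¹]][[q]]` has entries in `ℂ[ħ][[q]]`. -/
def MatPolyH {r n : ℕ} (M : Matrix (Fin n) (Fin n) (AA r)) : Prop :=
  ∀ i j d, isPolyH (M i j d)

/-- A matrix over `ℂ[ħ,ħ⁻¹]][[q]]` has entries in `ℂ[[ħ⁻¹]][[q]]`. -/
def MatRegH {r n : ℕ} (M : Matrix (Fin n) (Fin n) (AA r)) : Prop :=
  ∀ i j d, isRegH (M i j d)

/-- A matrix over `ℂ[ħ,ħ⁻¹]][[q]]` has entries in `ℂ[[q]]`,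
i.e. is independent of `ħ`. -/
def MatConstH {r n : ℕ} (M : Matrix (Fin n) (Fin n) (AA r)) : Prop :=
  ∀ i j d, isConstH (M i j d)

/-- Flatness: `ħ(θ_aΩ_b − θ_bΩ_a) + Ω_aΩ_b − Ω_bΩ_a = 0` for all `a, b`. -/
def IsFlat {r n : ℕ} (Ω : Fin r → Matrix (Fin n) (Fin n) (AA r)) : Prop :=
  ∀ a b, hbarA r • (thetaMat a (Ω b) - thetaMat b (Ω a)) + (Ω a * Ω b - Ω b * Ω a) = 0

lemma ls_coeff_sum {α : Type*} (s : Finset α) (f : α → LS) (k : ℤ) :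
    (∑ i ∈ s, f i).coeff k = ∑ i ∈ s, (f i).coeff k :=
  map_sum (HahnSeries.coeff.addMonoidHom k) f s

lemma regH_mul {x y : LS} (hx : isRegH x) (hy : isRegH y) : isRegH (x * y) := by
  intro k hk
  rw [HahnSeries.coeff_mul]
  refine Finset.sum_eq_zero fun ij hij => ?_
  rw [Finset.mem_addAntidiagonal] at hij
  rcases lt_or_ge ij.1 0 with h | h
  · rw [hx _ h, zero_mul]
  · have h2 : ij.2 < 0 := by have := hij.2.2; omega
    rw [hy _ h2, mul_zero]

lemma mul_coeff_le_one {x y : LS} (hx : isRegH x) (hy : ∀ k : ℤ, k ≤ 0 → y.coeff k = 0)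
    {k : ℤ} (hk : k ≤ 1) : (x * y).coeff k = x.coeff 0 * y.coeff k := by
  rw [HahnSeries.coeff_mul]
  apply Finset.sum_eq_single ((0 : ℤ), k)
  · intro b hb hne
    rw [Finset.mem_addAntidiagonal] at hb
    rcases le_or_gt b.2 0 with h2 | h2
    · rw [hy _ h2, mul_zero]
    · rcases lt_or_ge b.1 0 with h1 | h1
      · rw [hx _ h1, zero_mul]
      · exfalso
        have hb1 : b.1 = 0 := by have := hb.2.2; omega
        have hb2 : b.2 = k := by have := hb.2.2; omega
        exact hne (Prod.ext hb1 hb2)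
  · intro h
    by_contra hc
    apply h
    rw [Finset.mem_addAntidiagonal]
    refine ⟨?_, ?_, zero_add k⟩
    · rw [HahnSeries.mem_support]; intro h0; exact hc (by rw [h0, zero_mul])
    · rw [HahnSeries.mem_support]; intro h0; exact hc (by rw [h0, mul_zero])

lemma mul_coeff_const_left {x y : LS} (hx : isConstH x) (k : ℤ) :
    (x * y).coeff k = x.coeff 0 * y.coeff k := by
  rw [HahnSeries.coeff_mul]
  apply Finset.sum_eq_single ((0 : ℤ), k)
  · intro b hb hne
    rw [Finset.mem_addAntidiagonal] at hb
    by_cases h1 : b.1 = 0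
    · exact absurd (Prod.ext h1 (by have := hb.2.2; omega)) hne
    · rw [hx _ h1, zero_mul]
  · intro h
    by_contra hc
    apply h
    rw [Finset.mem_addAntidiagonal]
    refine ⟨?_, ?_, zero_add k⟩
    · rw [HahnSeries.mem_support]; intro h0; exact hc (by rw [h0, zero_mul])
    · rw [HahnSeries.mem_support]; intro h0; exact hc (by rw [h0, mul_zero])

lemma mul_coeff_const_right {x y : LS} (hy : isConstH y) (k : ℤ) :
    (x * y).coeff k = x.coeff k * y.coeff 0 := by
  rw [HahnSeries.coeff_mul]
  apply Finset.sum_eq_single ((k : ℤ), (0 : ℤ))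
  · intro b hb hne
    rw [Finset.mem_addAntidiagonal] at hb
    by_cases h2 : b.2 = 0
    · exact absurd (Prod.ext (by have := hb.2.2; omega) h2) hne
    · rw [hy _ h2, mul_zero]
  · intro h
    by_contra hc
    apply h
    rw [Finset.mem_addAntidiagonal]
    refine ⟨?_, ?_, add_zero k⟩
    · rw [HahnSeries.mem_support]; intro h0; exact hc (by rw [h0, zero_mul])
    · rw [HahnSeries.mem_support]; intro h0; exact hc (by rw [h0, mul_zero])

lemma hbar_mul_coeff (y : LS) (k : ℤ) : (hbarL * y).coeff k = y.coeff (k + 1) := by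
  have h := HahnSeries.coeff_single_mul_add (r := (1 : ℂ)) (x := y) (a := k + 1) (b := (-1 : ℤ))
  rw [show k + 1 + (-1 : ℤ) = k by ring] at h
  rw [show hbarL = HahnSeries.single (-1 : ℤ) (1 : ℂ) from rfl, h, one_mul]

lemma natmul_coeff (m : ℕ) (y : LS) (k : ℤ) : ((m : LS) * y).coeff k = (m : ℂ) * y.coeff k := by
  rw [← map_natCast (HahnSeries.C (R := ℂ) (Γ := ℤ)) m, HahnSeries.C_apply,
    HahnSeries.coeff_single_zero_mul]

lemma matMul_coeff' {r n : ℕ} (M N : Matrix (Fin n) (Fin n) (AA r)) (i j : Fin n)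
    (d : Fin r →₀ ℕ) :
    MvPowerSeries.coeff d ((M * N) i j) =
      ∑ pr ∈ Finset.HasAntidiagonal.antidiagonal d, ∑ l,
        MvPowerSeries.coeff pr.1 (M i l) * MvPowerSeries.coeff pr.2 (N l j) := by
  rw [Matrix.mul_apply, map_sum]
  rw [Finset.sum_congr rfl (fun l (_ : l ∈ Finset.univ) => MvPowerSeries.coeff_mul d (M i l) (N l j)),
    Finset.sum_comm]

lemma matMul_coeffH {r n : ℕ} (M N : Matrix (Fin n) (Fin n) (AA r)) (i j : Fin n)
    (d : Fin r →₀ ℕ) (k : ℤ) :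
    (MvPowerSeries.coeff d ((M * N) i j)).coeff k =
      ∑ pr ∈ Finset.HasAntidiagonal.antidiagonal d, ∑ l,
        (MvPowerSeries.coeff pr.1 (M i l) * MvPowerSeries.coeff pr.2 (N l j)).coeff k := by
  rw [matMul_coeff', ls_coeff_sum]
  exact Finset.sum_congr rfl fun pr _ => ls_coeff_sum _ _ _


def degF {r : ℕ} (d : Fin r →₀ ℕ) : ℕ := ∑ a, d a

lemma degF_lt {r : ℕ} {pr : (Fin r →₀ ℕ) × (Fin r →₀ ℕ)} {d : Fin r →₀ ℕ}
    (h : pr.1 + pr.2 = d) (h2 : pr.2 ≠ 0) : degF pr.1 < degF d := by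
  have hadd : degF d = degF pr.1 + degF pr.2 := by
    rw [← h]
    unfold degF
    rw [← Finset.sum_add_distrib]
    exact Finset.sum_congr rfl fun a _ => Finsupp.add_apply _ _ _
  have hpos : 0 < degF pr.2 := by
    obtain ⟨a, ha⟩ : ∃ a, pr.2 a ≠ 0 := by
      by_contra hall
      push_neg at hall
      exact h2 (by ext a; simpa using hall a)
    have h3 : pr.2 a ≤ degF pr.2 :=
      Finset.single_le_sum (fun _ _ => Nat.zero_le _) (Finset.mem_univ a)
    omega
  omega

lemma mulVec_coeffH {r n : ℕ} (M : Matrix (Fin n) (Fin n) (AA r)) (v : Fin n → ℂ) (i : Fin n)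
    (d : Fin r →₀ ℕ) (k : ℤ) :
    (MvPowerSeries.coeff d (M.mulVec (fun l => cA r (v l)) i)).coeff k
      = ∑ l, (MvPowerSeries.coeff d (M i l)).coeff k * v l := by
  rw [show M.mulVec (fun l => cA r (v l)) i = ∑ l, M i l * cA r (v l) from rfl]
  rw [map_sum, ls_coeff_sum]
  refine Finset.sum_congr rfl fun l _ => ?_
  rw [show cA r (v l) = (MvPowerSeries.C : LS →+* AA r) (HahnSeries.C (v l)) from rfl,
    MvPowerSeries.coeff_mul_C, HahnSeries.C_apply, HahnSeries.coeff_mul_single_zero]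

/-- **Asymptotics of the canonical `J`-function** (computation before equation
(3.9) in the paper).  Let `Ω_a ∈ Mat_n(ℂ[[q]])` with `p_a = Ω_a|_{q=0}`, let
`e₀` satisfy `Ω_a e₀ = p_a e₀` for all `a` (compatibility of the canonical
frame and coordinates), and let `S ∈ Mat_n(ℂ[[ħ⁻¹]][[q]])` be invertible with
`S|_{q=0} = Id` and `ħθ_a S + Ω_a S − S p_a = 0`.  Then `S ≡ Id (mod ħ⁻¹)`,
and writing `S⁻¹ = Id + ħ⁻¹S₁ + ⋯` one has `S₁e₀ = 0`; equivalently
`S⁻¹e₀ ≡ e₀ (mod ħ⁻²)`. -/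
theorem canonical_J_asymptotics {r n : ℕ} (hr : 1 ≤ r) (hn : 1 ≤ n)
    (Ω : Fin r → Matrix (Fin n) (Fin n) (AA r))
    (hconst : ∀ a, MatConstH (Ω a))
    (p : Fin r → Matrix (Fin n) (Fin n) ℂ)
    (hp : ∀ a i j, ccA (Ω a i j) = HahnSeries.C (p a i j))
    (e0 : Fin n → ℂ)
    (he0 : ∀ a, (Ω a).mulVec (fun i => cA r (e0 i)) =
      ((p a).map (cA r)).mulVec (fun i => cA r (e0 i)))
    (S : Matrix (Fin n) (Fin n) (AA r))
    (hSreg : MatRegH S)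
    (hScc : S.map ccA = 1)
    (hSunit : IsUnit S)
    (hSeq : ∀ a, hbarA r • thetaMat a S + Ω a * S - S * (p a).map (cA r) = 0) :
    (∀ i j d, (S i j d).coeff 0 =
      MvPowerSeries.coeff d ((1 : Matrix (Fin n) (Fin n) (MvPowerSeries (Fin r) ℂ)) i j)) ∧
    (∀ T : Matrix (Fin n) (Fin n) (AA r), S * T = 1 → T * S = 1 →
      ∀ k : ℤ, k < 2 → ∀ i d,
        ((T.mulVec (fun i => cA r (e0 i)) i) d).coeff k =
          if k = 0 then MvPowerSeries.coeff d ((MvPowerSeries.C : ℂ →+* MvPowerSeries (Fin r) ℂ) (e0 i))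
          else 0) := by
    classical
  have hSreg' : ∀ (i j : Fin n) (d : Fin r →₀ ℕ) (k : ℤ), k < 0 →
      (MvPowerSeries.coeff d (S i j)).coeff k = 0 := fun i j d k hk => hSreg i j d k hk
  have hconst' : ∀ (a : Fin r) (i j : Fin n) (d : Fin r →₀ ℕ),
      isConstH (MvPowerSeries.coeff d (Ω a i j)) := fun a i j d => hconst a i j d
  have hS0 : ∀ i j : Fin n, MvPowerSeries.coeff 0 (S i j) = if i = j then (1:LS) else 0 := by
    intro i j
    have h := Matrix.ext_iff.mpr hScc i j
    rw [Matrix.map_apply, Matrix.one_apply] at h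
    exact h
  have hPcoeff : ∀ (a : Fin r) (l j : Fin n) (d2 : Fin r →₀ ℕ),
      MvPowerSeries.coeff d2 (((p a).map (cA r)) l j)
        = if d2 = 0 then HahnSeries.C (p a l j) else 0 := by
    intro a l j d2
    rw [Matrix.map_apply,
      show cA r (p a l j) = (MvPowerSeries.C : LS →+* AA r) (HahnSeries.C (p a l j)) from rfl,
      MvPowerSeries.coeff_C]
  have hPconst : ∀ (a : Fin r) (l j : Fin n) (d2 : Fin r →₀ ℕ),
      isConstH (MvPowerSeries.coeff d2 (((p a).map (cA r)) l j)) := by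
    intro a l j d2 k hk
    rw [hPcoeff]
    split
    · rw [HahnSeries.C_apply, HahnSeries.coeff_single]
      simp [hk]
    · simp
  have ode : ∀ (a : Fin r) (i j : Fin n) (d : Fin r →₀ ℕ) (k : ℤ),
      (d a : ℂ) * (MvPowerSeries.coeff d (S i j)).coeff (k+1)
      + (MvPowerSeries.coeff d ((Ω a * S) i j)).coeff k
      - (MvPowerSeries.coeff d ((S * (p a).map (cA r)) i j)).coeff k = 0 := by
    intro a i j d k
    have h0 := Matrix.ext_iff.mpr (hSeq a) i j
    rw [Matrix.sub_apply, Matrix.add_apply, Matrix.zero_apply] at h0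
    have h1 := congrArg (fun x : AA r => (MvPowerSeries.coeff d x).coeff k) h0
    simp only [map_sub, map_add, HahnSeries.coeff_sub, HahnSeries.coeff_add, map_zero,
      HahnSeries.coeff_zero] at h1
    have h2 : (MvPowerSeries.coeff d ((hbarA r • thetaMat a S) i j)).coeff k
        = (d a : ℂ) * (MvPowerSeries.coeff d (S i j)).coeff (k+1) := by
      rw [Matrix.smul_apply, smul_eq_mul,
        show hbarA r = (MvPowerSeries.C : LS →+* AA r) hbarL from rfl,
        MvPowerSeries.coeff_C_mul,
        show MvPowerSeries.coeff d (thetaMat a S i j)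
          = (d a : LS) * MvPowerSeries.coeff d (S i j) from rfl,
        hbar_mul_coeff, natmul_coeff]
    rw [h2] at h1
    exact h1
  have hXneg : ∀ (a : Fin r) (i j : Fin n) (d : Fin r →₀ ℕ) (k : ℤ), k < 0 →
      (MvPowerSeries.coeff d ((Ω a * S) i j)).coeff k = 0 := by
    intro a i j d k hk
    rw [matMul_coeffH]
    refine Finset.sum_eq_zero fun pr _ => Finset.sum_eq_zero fun l _ => ?_
    rw [mul_coeff_const_left (hconst' a i l pr.1) k, hSreg' l j pr.2 k hk, mul_zero]
  have hYneg : ∀ (a : Fin r) (i j : Fin n) (d : Fin r →₀ ℕ) (k : ℤ), k < 0 →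
      (MvPowerSeries.coeff d ((S * (p a).map (cA r)) i j)).coeff k = 0 := by
    intro a i j d k hk
    rw [matMul_coeffH]
    refine Finset.sum_eq_zero fun pr _ => Finset.sum_eq_zero fun l _ => ?_
    rw [mul_coeff_const_right (hPconst a l j pr.2) k, hSreg' i l pr.1 k hk, zero_mul]
  have part1 : ∀ (i j : Fin n) (d : Fin r →₀ ℕ),
      (MvPowerSeries.coeff d (S i j)).coeff 0
        = (if i = j then (1:ℂ) else 0) * (if d = 0 then 1 else 0) := by
    intro i j d
    by_cases hd : d = 0
    · subst hd
      rw [hS0 i j]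
      by_cases hij : i = j <;> simp [hij, HahnSeries.coeff_one]
    · obtain ⟨a, ha⟩ : ∃ a, d a ≠ 0 := by
        by_contra hall
        push_neg at hall
        exact hd (by ext a; simpa using hall a)
      have h := ode a i j d (-1)
      rw [show (-1 : ℤ) + 1 = 0 by ring] at h
      rw [hXneg a i j d (-1) (by norm_num), hYneg a i j d (-1) (by norm_num)] at h
      have h0 : (MvPowerSeries.coeff d (S i j)).coeff 0 = 0 := by
        have hda : (d a : ℂ) ≠ 0 := Nat.cast_ne_zero.mpr ha
        have h3 : (d a : ℂ) * (MvPowerSeries.coeff d (S i j)).coeff 0 = 0 := by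
          linear_combination h
        exact (mul_eq_zero.mp h3).resolve_left hda
      rw [h0, if_neg hd, mul_zero]
  have hord : ∀ (l j : Fin n) (d2 : Fin r →₀ ℕ), d2 ≠ 0 → ∀ k : ℤ, k ≤ 0 →
      (MvPowerSeries.coeff d2 (S l j)).coeff k = 0 := by
    intro l j d2 hd2 k hk
    rcases hk.lt_or_eq with h | h
    · exact hSreg l j d2 k h
    · subst h
      rw [part1, if_neg hd2, mul_zero]
  have hOS : ∀ (a : Fin r) (i j : Fin n) (d : Fin r →₀ ℕ),
      (MvPowerSeries.coeff d ((Ω a * S) i j)).coeff 0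
        = (MvPowerSeries.coeff d (Ω a i j)).coeff 0 := by
    intro a i j d
    rw [matMul_coeffH]
    have hinner : ∀ pr ∈ Finset.HasAntidiagonal.antidiagonal d,
        (∑ l, (MvPowerSeries.coeff pr.1 (Ω a i l)
            * MvPowerSeries.coeff pr.2 (S l j)).coeff 0)
          = if pr.2 = 0 then (MvPowerSeries.coeff pr.1 (Ω a i j)).coeff 0 else 0 := by
      intro pr _
      have h4 : ∀ l ∈ (Finset.univ : Finset (Fin n)),
          (MvPowerSeries.coeff pr.1 (Ω a i l) * MvPowerSeries.coeff pr.2 (S l j)).coeff 0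
            = if l = j then (if pr.2 = 0 then (MvPowerSeries.coeff pr.1 (Ω a i l)).coeff 0
                else 0) else 0 := by
        intro l _
        rw [mul_coeff_const_left (hconst' a i l pr.1) 0, part1]
        by_cases hlj : l = j <;> by_cases h2 : pr.2 = 0 <;> simp [hlj, h2]
      rw [Finset.sum_congr rfl h4, Finset.sum_ite_eq' Finset.univ j]
      simp
    rw [Finset.sum_congr rfl hinner]
    refine (Finset.sum_eq_single ((d, (0 : Fin r →₀ ℕ))) ?_ ?_).trans ?_
    · intro pr hpr hne
      rw [if_neg]
      intro h2
      apply hne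
      have h1 := Finset.HasAntidiagonal.mem_antidiagonal.mp hpr
      rw [h2, add_zero] at h1
      exact Prod.ext h1 h2
    · intro h
      exact absurd (Finset.HasAntidiagonal.mem_antidiagonal.mpr (add_zero d)) h
    · simp
  have hOe0 : ∀ (a : Fin r) (i : Fin n) (d : Fin r →₀ ℕ),
      (∑ j, (MvPowerSeries.coeff d (Ω a i j)).coeff 0 * e0 j)
        = (if d = 0 then 1 else 0) * (∑ j, p a i j * e0 j) := by
    intro a i d
    have h := congrFun (he0 a) i
    have h1 := congrArg (fun x : AA r => (MvPowerSeries.coeff d x).coeff 0) h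
    rw [mulVec_coeffH, mulVec_coeffH] at h1
    rw [h1]
    by_cases hd : d = 0
    · subst hd
      rw [if_pos rfl, one_mul]
      refine Finset.sum_congr rfl fun j _ => ?_
      rw [hPcoeff, if_pos rfl, HahnSeries.C_apply, HahnSeries.coeff_single_same]
    · rw [if_neg hd, zero_mul]
      refine Finset.sum_eq_zero fun j _ => ?_
      rw [hPcoeff, if_neg hd, HahnSeries.coeff_zero, zero_mul]
  have hSP0 : ∀ (a : Fin r) (i j : Fin n) (d : Fin r →₀ ℕ), d ≠ 0 →
      (MvPowerSeries.coeff d ((S * (p a).map (cA r)) i j)).coeff 0 = 0 := by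
    intro a i j d hd
    rw [matMul_coeffH]
    refine Finset.sum_eq_zero fun pr hpr => Finset.sum_eq_zero fun l _ => ?_
    rw [mul_coeff_const_right (hPconst a l j pr.2) 0]
    by_cases h1 : pr.1 = 0
    · have h2 : pr.2 ≠ 0 := by
        intro h2
        apply hd
        have h3 := Finset.HasAntidiagonal.mem_antidiagonal.mp hpr
        rw [← h3, h1, h2, add_zero]
      rw [hPcoeff, if_neg h2, HahnSeries.coeff_zero, mul_zero]
    · rw [part1, if_neg h1, mul_zero, zero_mul]
  have s1e0 : ∀ (i : Fin n) (d : Fin r →₀ ℕ),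
      (∑ j, (MvPowerSeries.coeff d (S i j)).coeff 1 * e0 j) = 0 := by
    intro i d
    by_cases hd : d = 0
    · subst hd
      refine Finset.sum_eq_zero fun j _ => ?_
      rw [hS0 i j]
      by_cases hij : i = j <;> simp [hij, HahnSeries.coeff_one]
    · obtain ⟨a, ha⟩ : ∃ a, d a ≠ 0 := by
        by_contra hall
        push_neg at hall
        exact hd (by ext a; simpa using hall a)
      have hsum : ∑ j, (((d a : ℂ) * (MvPowerSeries.coeff d (S i j)).coeff 1
          + (MvPowerSeries.coeff d ((Ω a * S) i j)).coeff 0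
          - (MvPowerSeries.coeff d ((S * (p a).map (cA r)) i j)).coeff 0) * e0 j) = 0 := by
        refine Finset.sum_eq_zero fun j _ => ?_
        have h := ode a i j d 0
        rw [show (0:ℤ) + 1 = 1 by ring] at h
        rw [h, zero_mul]
      have hexp : (∑ j, ((d a : ℂ) * ((MvPowerSeries.coeff d (S i j)).coeff 1 * e0 j)))
          + ∑ j, (MvPowerSeries.coeff d ((Ω a * S) i j)).coeff 0 * e0 j = 0 := by
        rw [← Finset.sum_add_distrib, ← hsum]
        refine Finset.sum_congr rfl fun j _ => ?_
        rw [hSP0 a i j d hd]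
        ring
      rw [← Finset.mul_sum] at hexp
      have hmid : ∑ j, (MvPowerSeries.coeff d ((Ω a * S) i j)).coeff 0 * e0 j = 0 := by
        have h1 : ∀ j ∈ (Finset.univ : Finset (Fin n)),
            (MvPowerSeries.coeff d ((Ω a * S) i j)).coeff 0 * e0 j
              = (MvPowerSeries.coeff d (Ω a i j)).coeff 0 * e0 j := fun j _ => by rw [hOS]
        rw [Finset.sum_congr rfl h1, hOe0 a i d, if_neg hd, zero_mul]
      rw [hmid, add_zero] at hexp
      exact (mul_eq_zero.mp hexp).resolve_left (Nat.cast_ne_zero.mpr ha)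
  constructor
  · intro i j d
    have h := part1 i j d
    rw [Matrix.one_apply]
    by_cases hij : i = j
    · rw [if_pos hij, MvPowerSeries.coeff_one]
      by_cases hd : d = 0
      · rw [if_pos hd]
        rw [if_pos hij, if_pos hd, one_mul] at h
        exact h
      · rw [if_neg hd]
        rw [if_neg hd, mul_zero] at h
        exact h
    · rw [if_neg hij, map_zero]
      rw [if_neg hij, zero_mul] at h
      exact h
  · intro T hST hTS k hk i d
    have hone : ∀ (i j : Fin n) (d : Fin r →₀ ℕ),
        MvPowerSeries.coeff d ((1 : Matrix (Fin n) (Fin n) (AA r)) i j)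
          = (if i = j then (1:LS) else 0) * (if d = 0 then (1:LS) else 0) := by
      intro i j d
      by_cases hij : i = j <;> by_cases hd : d = 0 <;>
        simp [hij, hd, Matrix.one_apply, MvPowerSeries.coeff_one]
    have hTf : ∀ (i j : Fin n) (d : Fin r →₀ ℕ),
        MvPowerSeries.coeff d (T i j)
          = (if i = j then (1:LS) else 0) * (if d = 0 then (1:LS) else 0)
            - ∑ pr ∈ (Finset.HasAntidiagonal.antidiagonal d).erase (d, 0), ∑ l,
                MvPowerSeries.coeff pr.1 (T i l) * MvPowerSeries.coeff pr.2 (S l j) := by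
      intro i j d
      have h1 : MvPowerSeries.coeff d ((T * S) i j)
          = MvPowerSeries.coeff d ((1 : Matrix (Fin n) (Fin n) (AA r)) i j) := by rw [hTS]
      rw [matMul_coeff', hone,
        ← Finset.add_sum_erase _ _ (show ((d, (0:Fin r →₀ ℕ))) ∈ Finset.HasAntidiagonal.antidiagonal d from
          Finset.HasAntidiagonal.mem_antidiagonal.mpr (add_zero d))] at h1
      have h2 : (∑ l, MvPowerSeries.coeff ((d, (0:Fin r →₀ ℕ))).1 (T i l)
            * MvPowerSeries.coeff ((d, (0:Fin r →₀ ℕ))).2 (S l j))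
          = MvPowerSeries.coeff d (T i j) := by
        have h4 : ∀ l ∈ (Finset.univ : Finset (Fin n)),
            MvPowerSeries.coeff ((d, (0:Fin r →₀ ℕ))).1 (T i l)
              * MvPowerSeries.coeff ((d, (0:Fin r →₀ ℕ))).2 (S l j)
            = if l = j then MvPowerSeries.coeff d (T i l) else 0 := by
          intro l _
          rw [show MvPowerSeries.coeff ((d, (0:Fin r →₀ ℕ))).2 (S l j)
            = if l = j then (1:LS) else 0 from hS0 l j]
          by_cases hlj : l = j <;> simp [hlj]
        rw [Finset.sum_congr rfl h4, Finset.sum_ite_eq' Finset.univ j]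
        simp
      rw [h2] at h1
      exact eq_sub_of_add_eq h1
    have hδ : ∀ (i j : Fin n) (d : Fin r →₀ ℕ) (k : ℤ),
        ((if i = j then (1:LS) else 0) * (if d = 0 then (1:LS) else 0)).coeff k
          = if k = 0 then (if i = j then (1:ℂ) else 0) * (if d = 0 then 1 else 0) else 0 := by
      intro i j d k
      by_cases hij : i = j <;> by_cases hd : d = 0 <;> by_cases hk : k = 0 <;>
        simp [hij, hd, hk, HahnSeries.coeff_one]
    have Tkey : ∀ N : ℕ, ∀ d : Fin r →₀ ℕ, degF d < N → ∀ i j : Fin n,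
        isRegH (MvPowerSeries.coeff d (T i j)) ∧
        (MvPowerSeries.coeff d (T i j)).coeff 0
          = (if i = j then (1:ℂ) else 0) * (if d = 0 then 1 else 0) ∧
        (MvPowerSeries.coeff d (T i j)).coeff 1
          = -(MvPowerSeries.coeff d (S i j)).coeff 1 := by
      intro N
      induction N with
      | zero => intro d hd; exact absurd hd (Nat.not_lt_zero _)
      | succ N IH =>
        intro d hd i j
        have hprfacts : ∀ pr ∈ (Finset.HasAntidiagonal.antidiagonal d).erase ((d, (0:Fin r →₀ ℕ))),
            pr.2 ≠ 0 ∧ degF pr.1 < N := by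
          intro pr hpr
          rw [Finset.mem_erase] at hpr
          have hpr2 : pr.2 ≠ 0 := by
            intro h2
            apply hpr.1
            have h1 := Finset.HasAntidiagonal.mem_antidiagonal.mp hpr.2
            rw [h2, add_zero] at h1
            exact Prod.ext h1 h2
          have h5 := degF_lt (Finset.HasAntidiagonal.mem_antidiagonal.mp hpr.2) hpr2
          exact ⟨hpr2, by omega⟩
        have hcoeff : ∀ k : ℤ, (MvPowerSeries.coeff d (T i j)).coeff k
            = ((if i = j then (1:LS) else 0) * (if d = 0 then (1:LS) else 0)).coeff k
              - ∑ pr ∈ (Finset.HasAntidiagonal.antidiagonal d).erase (d, 0), ∑ l,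
                  (MvPowerSeries.coeff pr.1 (T i l)
                    * MvPowerSeries.coeff pr.2 (S l j)).coeff k := by
          intro k
          rw [hTf i j d, HahnSeries.coeff_sub, ls_coeff_sum]
          congr 1
          exact Finset.sum_congr rfl fun pr _ => ls_coeff_sum _ _ _
        refine ⟨?_, ?_, ?_⟩
        · intro k hk
          have hz : ∑ pr ∈ (Finset.HasAntidiagonal.antidiagonal d).erase (d, 0), ∑ l,
              (MvPowerSeries.coeff pr.1 (T i l)
                * MvPowerSeries.coeff pr.2 (S l j)).coeff k = 0 :=
            Finset.sum_eq_zero fun pr hpr => Finset.sum_eq_zero fun l _ =>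
              regH_mul (IH pr.1 (hprfacts pr hpr).2 i l).1 (hSreg l j pr.2) k hk
          rw [hcoeff k, hδ, if_neg (by omega : ¬ k = 0), hz, sub_zero]
        · have hz : ∑ pr ∈ (Finset.HasAntidiagonal.antidiagonal d).erase (d, 0), ∑ l,
              (MvPowerSeries.coeff pr.1 (T i l)
                * MvPowerSeries.coeff pr.2 (S l j)).coeff 0 = 0 := by
            refine Finset.sum_eq_zero fun pr hpr => Finset.sum_eq_zero fun l _ => ?_
            obtain ⟨h2, hlt⟩ := hprfacts pr hpr
            rw [mul_coeff_le_one (IH pr.1 hlt i l).1 (hord l j pr.2 h2) (by norm_num),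
              hord l j pr.2 h2 0 le_rfl, mul_zero]
          rw [hcoeff 0, hδ, if_pos rfl, hz, sub_zero]
        · have hz : ∀ pr ∈ (Finset.HasAntidiagonal.antidiagonal d).erase ((d, (0:Fin r →₀ ℕ))),
              (∑ l, (MvPowerSeries.coeff pr.1 (T i l)
                  * MvPowerSeries.coeff pr.2 (S l j)).coeff 1)
                = if pr.1 = 0 then (MvPowerSeries.coeff pr.2 (S i j)).coeff 1 else 0 := by
            intro pr hpr
            obtain ⟨h2, hlt⟩ := hprfacts pr hpr
            have h4 : ∀ l ∈ (Finset.univ : Finset (Fin n)),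
                (MvPowerSeries.coeff pr.1 (T i l)
                  * MvPowerSeries.coeff pr.2 (S l j)).coeff 1
                  = if i = l then (if pr.1 = 0
                      then (MvPowerSeries.coeff pr.2 (S l j)).coeff 1 else 0) else 0 := by
              intro l _
              rw [mul_coeff_le_one (IH pr.1 hlt i l).1 (hord l j pr.2 h2) le_rfl,
                (IH pr.1 hlt i l).2.1]
              by_cases hli : i = l <;> by_cases h1 : pr.1 = 0 <;> simp [hli, h1]
            rw [Finset.sum_congr rfl h4, Finset.sum_ite_eq Finset.univ i]
            simp
          have hz2 : (∑ pr ∈ (Finset.HasAntidiagonal.antidiagonal d).erase ((d, (0:Fin r →₀ ℕ))),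
              if pr.1 = 0 then (MvPowerSeries.coeff pr.2 (S i j)).coeff 1 else 0)
                = (MvPowerSeries.coeff d (S i j)).coeff 1 := by
            refine (Finset.sum_eq_single (((0:Fin r →₀ ℕ), d)) ?_ ?_).trans ?_
            · intro pr hpr hne
              rw [Finset.mem_erase] at hpr
              rw [if_neg]
              intro h1
              apply hne
              have h3 := Finset.HasAntidiagonal.mem_antidiagonal.mp hpr.2
              rw [h1, zero_add] at h3
              exact Prod.ext h1 h3
            · intro h
              have h0 : d = 0 := by
                by_contra hd0
                apply h
                rw [Finset.mem_erase]
                refine ⟨?_, Finset.HasAntidiagonal.mem_antidiagonal.mpr (zero_add d)⟩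
                intro he
                exact hd0 ((congrArg Prod.fst he).symm)
              subst h0
              rw [if_pos rfl, hS0 i j]
              by_cases hij : i = j <;> simp [hij, HahnSeries.coeff_one]
            · rw [if_pos rfl]
          rw [hcoeff 1, Finset.sum_congr rfl hz, hz2, hδ,
            if_neg (one_ne_zero : (1:ℤ) ≠ 0), zero_sub]
    have Tfacts := fun (d : Fin r →₀ ℕ) => Tkey (degF d + 1) d (Nat.lt_succ_self _)
    rcases lt_or_ge k 0 with hneg | hpos
    · rw [if_neg (by omega : ¬ k = 0)]
      calc ((T.mulVec (fun i => cA r (e0 i)) i) d).coeff k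
          = ∑ l, (MvPowerSeries.coeff d (T i l)).coeff k * e0 l :=
            mulVec_coeffH T e0 i d k
        _ = 0 := Finset.sum_eq_zero fun l _ => by rw [(Tfacts d i l).1 k hneg, zero_mul]
    · have hk01 : k = 0 ∨ k = 1 := by omega
      rcases hk01 with h0 | h1
      · subst h0
        rw [if_pos rfl, MvPowerSeries.coeff_C]
        calc ((T.mulVec (fun i => cA r (e0 i)) i) d).coeff 0
            = ∑ l, (MvPowerSeries.coeff d (T i l)).coeff 0 * e0 l :=
              mulVec_coeffH T e0 i d 0
          _ = ∑ l, (if i = l then (if d = 0 then e0 l else 0) else 0) := by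
              refine Finset.sum_congr rfl fun l _ => ?_
              rw [(Tfacts d i l).2.1]
              by_cases hil : i = l <;> by_cases hd : d = 0 <;> simp [hil, hd]
          _ = if d = 0 then e0 i else 0 := by
              rw [Finset.sum_ite_eq Finset.univ i]
              simp
      · subst h1
        rw [if_neg (one_ne_zero : (1:ℤ) ≠ 0)]
        calc ((T.mulVec (fun i => cA r (e0 i)) i) d).coeff 1
            = ∑ l, (MvPowerSeries.coeff d (T i l)).coeff 1 * e0 l :=
              mulVec_coeffH T e0 i d 1
          _ = ∑ l, -((MvPowerSeries.coeff d (S i l)).coeff 1 * e0 l) := by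
              refine Finset.sum_congr rfl fun l _ => ?_
              rw [(Tfacts d i l).2.2, neg_mul]
          _ = 0 := by
              rw [Finset.sum_neg_distrib, s1e0 i d, neg_zero]
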